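/- With m₁ = 6, m₂ = 2, m₃ = 7, m₄ = 2, m₅ = 9 (so A = 84, B = 35, C = 7), the quadratic form -84x₁² - 84x₂² + y₃² - 637·y₄² has no nontrivial zero over ℚ₇ (equivalently, 84x₁² + 84x₂² + 637y₄² = y₃² has only the trivial 7-adic solution). -/

import Mathlib

instance : Fact (Nat.Prime 7) := ⟨by norm_num⟩

lemma dvd7_iff (x : ℤ_[7]) : PadicInt.toZMod x = 0 ↔ (7 : ℤ_[7]) ∣ x := by
  rw [← RingHom.mem_ker, PadicInt.ker_toZMod, PadicInt.maximalIdeal_eq_span_p,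
    Ideal.mem_span_singleton]
  norm_num

lemma seven_ne_zero : (7 : ℤ_[7]) ≠ 0 := by
  intro h
  have : ((7 : ℕ) : ℤ_[7]) = 0 := by exact_mod_cast h
  simp at this

lemma core (a b c d : ℤ_[7]) (h : -84 * a ^ 2 - 84 * b ^ 2 + c ^ 2 - 637 * d ^ 2 = 0) :
    (7 : ℤ_[7]) ∣ a ∧ (7 : ℤ_[7]) ∣ b ∧ (7 : ℤ_[7]) ∣ c ∧ (7 : ℤ_[7]) ∣ d := by
  -- step 1: 7 ∣ c
  have hc : (7 : ℤ_[7]) ∣ c := by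
    rw [← dvd7_iff]
    have h0 := congrArg PadicInt.toZMod h
    simp only [map_add, map_sub, map_neg, map_mul, map_pow, map_ofNat, map_zero] at h0
    revert h0
    generalize PadicInt.toZMod a = A
    generalize PadicInt.toZMod b = B
    generalize PadicInt.toZMod c = C
    generalize PadicInt.toZMod d = D
    revert A B C D
    decide
  obtain ⟨t, rfl⟩ := hc
  have h2 : -12 * a ^ 2 - 12 * b ^ 2 + 7 * t ^ 2 - 91 * d ^ 2 = 0 := by
    apply mul_left_cancel₀ seven_ne_zero
    ring_nf
    ring_nf at h
    linear_combination h
  have hab : (7 : ℤ_[7]) ∣ a ∧ (7 : ℤ_[7]) ∣ b := by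
    rw [← dvd7_iff, ← dvd7_iff]
    have h0 := congrArg PadicInt.toZMod h2
    simp only [map_add, map_sub, map_neg, map_mul, map_pow, map_ofNat, map_zero] at h0
    revert h0
    generalize PadicInt.toZMod a = A
    generalize PadicInt.toZMod b = B
    generalize PadicInt.toZMod t = T
    generalize PadicInt.toZMod d = D
    revert A B T D
    decide
  obtain ⟨⟨u, rfl⟩, ⟨v, rfl⟩⟩ := hab
  have h3 : -84 * u ^ 2 - 84 * v ^ 2 + t ^ 2 - 13 * d ^ 2 = 0 := by
    apply mul_left_cancel₀ seven_ne_zero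
    linear_combination h2
  have hd : (7 : ℤ_[7]) ∣ d := by
    rw [← dvd7_iff]
    have h0 := congrArg PadicInt.toZMod h3
    simp only [map_add, map_sub, map_neg, map_mul, map_pow, map_ofNat, map_zero] at h0
    revert h0
    generalize PadicInt.toZMod u = U
    generalize PadicInt.toZMod v = V
    generalize PadicInt.toZMod t = T
    generalize PadicInt.toZMod d = D
    revert U V T D
    decide
  exact ⟨⟨u, rfl⟩, ⟨v, rfl⟩, ⟨t, rfl⟩, hd⟩

lemma helper (x₁ x₂ y₃ y₄ : ℚ_[7]) (h1 : ‖x₁‖ ≤ 1) (h2 : ‖x₂‖ ≤ 1) (h3 : ‖y₃‖ ≤ 1)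
    (h4 : ‖y₄‖ ≤ 1)
    (heq : -84 * x₁ ^ 2 - 84 * x₂ ^ 2 + y₃ ^ 2 - 637 * y₄ ^ 2 = 0) :
    ‖x₁‖ < 1 ∧ ‖x₂‖ < 1 ∧ ‖y₃‖ < 1 ∧ ‖y₄‖ < 1 := by
  set a : ℤ_[7] := ⟨x₁, h1⟩ with ha
  set b : ℤ_[7] := ⟨x₂, h2⟩ with hb
  set c : ℤ_[7] := ⟨y₃, h3⟩ with hc
  set d : ℤ_[7] := ⟨y₄, h4⟩ with hd
  have heq' : -84 * a ^ 2 - 84 * b ^ 2 + c ^ 2 - 637 * d ^ 2 = 0 := by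
    apply Subtype.ext
    push_cast
    exact heq
  obtain ⟨da, db, dc, dd⟩ := core a b c d heq'
  have key : ∀ z : ℤ_[7], (7 : ℤ_[7]) ∣ z → ‖z‖ < 1 := by
    intro z hz
    rw [PadicInt.norm_lt_one_iff_dvd]
    exact_mod_cast hz
  exact ⟨key a da, key b db, key c dc, key d dd⟩

theorem stmt12 :
    ¬ ∃ x₁ x₂ y₃ y₄ : ℚ_[7], (x₁, x₂, y₃, y₄) ≠ (0, 0, 0, 0) ∧
      -84 * x₁ ^ 2 - 84 * x₂ ^ 2 + y₃ ^ 2 - 637 * y₄ ^ 2 = 0 := by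
  rintro ⟨x₁, x₂, y₃, y₄, hne, heq⟩
  have hne' : x₁ ≠ 0 ∨ x₂ ≠ 0 ∨ y₃ ≠ 0 ∨ y₄ ≠ 0 := by
    by_contra h
    push_neg at h
    exact hne (by simp [h.1, h.2.1, h.2.2.1, h.2.2.2])
  have key : ∀ z : ℚ_[7], z ≠ 0 → ‖x₁‖ ≤ ‖z‖ → ‖x₂‖ ≤ ‖z‖ → ‖y₃‖ ≤ ‖z‖ → ‖y₄‖ ≤ ‖z‖ →
      ‖x₁‖ < ‖z‖ ∧ ‖x₂‖ < ‖z‖ ∧ ‖y₃‖ < ‖z‖ ∧ ‖y₄‖ < ‖z‖ := by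
    intro z hz h1 h2 h3 h4
    have hzn : 0 < ‖z‖ := norm_pos_iff.mpr hz
    have heq2 : -84 * (x₁ / z) ^ 2 - 84 * (x₂ / z) ^ 2 + (y₃ / z) ^ 2 - 637 * (y₄ / z) ^ 2 = 0 := by
      field_simp
      linear_combination heq
    have hh := helper (x₁ / z) (x₂ / z) (y₃ / z) (y₄ / z)
      (by rw [norm_div]; exact div_le_one_of_le₀ h1 hzn.le)
      (by rw [norm_div]; exact div_le_one_of_le₀ h2 hzn.le)
      (by rw [norm_div]; exact div_le_one_of_le₀ h3 hzn.le)
      (by rw [norm_div]; exact div_le_one_of_le₀ h4 hzn.le) heq2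
    rw [norm_div, norm_div, norm_div, norm_div, div_lt_one hzn, div_lt_one hzn,
      div_lt_one hzn, div_lt_one hzn] at hh
    exact hh
  have hmax : ∃ z : ℚ_[7], (z = x₁ ∨ z = x₂ ∨ z = y₃ ∨ z = y₄) ∧
      ‖x₁‖ ≤ ‖z‖ ∧ ‖x₂‖ ≤ ‖z‖ ∧ ‖y₃‖ ≤ ‖z‖ ∧ ‖y₄‖ ≤ ‖z‖ := by
    rcases le_total ‖x₁‖ ‖x₂‖ with h12 | h12 <;>
    rcases le_total ‖y₃‖ ‖y₄‖ with h34 | h34 <;>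
    rcases le_total ‖x₂‖ ‖y₄‖ with ha | ha <;>
    rcases le_total ‖x₂‖ ‖y₃‖ with hb | hb <;>
    rcases le_total ‖x₁‖ ‖y₄‖ with hc | hc <;>
    rcases le_total ‖x₁‖ ‖y₃‖ with hd | hd <;>
    first
      | exact ⟨x₁, Or.inl rfl, le_refl _, by linarith, by linarith, by linarith⟩
      | exact ⟨x₂, Or.inr (Or.inl rfl), by linarith, le_refl _, by linarith, by linarith⟩
      | exact ⟨y₃, Or.inr (Or.inr (Or.inl rfl)), by linarith, by linarith, le_refl _, by linarith⟩
      | exact ⟨y₄, Or.inr (Or.inr (Or.inr rfl)), by linarith, by linarith, by linarith, le_refl _⟩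
  obtain ⟨z, hzmem, hz1, hz2, hz3, hz4⟩ := hmax
  have hz0 : z ≠ 0 := by
    rw [← norm_pos_iff]
    rcases hne' with h | h | h | h
    · exact lt_of_lt_of_le (norm_pos_iff.mpr h) hz1
    · exact lt_of_lt_of_le (norm_pos_iff.mpr h) hz2
    · exact lt_of_lt_of_le (norm_pos_iff.mpr h) hz3
    · exact lt_of_lt_of_le (norm_pos_iff.mpr h) hz4
  obtain ⟨l1, l2, l3, l4⟩ := key z hz0 hz1 hz2 hz3 hz4
  rcases hzmem with rfl | rfl | rfl | rfl
  · exact lt_irrefl _ l1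
  · exact lt_irrefl _ l2
  · exact lt_irrefl _ l3
  · exact lt_irrefl _ l4
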